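/- In F2[t_1, ..., t_6] with the Steenrod algebra action, the cohit space QP_4^{⊗6} (degree-4 homogeneous polynomials modulo hit elements) has dimension 85 over F2. -/

import Mathlib

open MvPolynomial

/-- The total Steenrod square on `F2[t_1,…,t_h]`: the algebra endomorphism `t_j ↦ t_j + t_j^2`.
Its degree-`(m+k)` homogeneous component on a degree-`m` homogeneous polynomial is `Sq^k`,
which on monomials agrees with the Cartan formula and `Sq^k(t_j^m) = C(m,k) t_j^{m+k}` mod 2. -/
noncomputable def sqT (h : ℕ) :
    MvPolynomial (Fin h) (ZMod 2) →ₐ[ZMod 2] MvPolynomial (Fin h) (ZMod 2) :=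
  aeval (fun j => X j + X j ^ 2)

/-- The hit subspace in degree `n`: the span of all `Sq^k f` with `1 ≤ k ≤ n` and
`f` homogeneous of degree `n − k` (i.e. the degree-`n` component of the total square of `f`). -/
noncomputable def hitSub (h n : ℕ) : Submodule (ZMod 2) (MvPolynomial (Fin h) (ZMod 2)) :=
  Submodule.span (ZMod 2)
    {g | ∃ k f, 1 ≤ k ∧ k ≤ n ∧ MvPolynomial.IsHomogeneous f (n - k) ∧
      g = MvPolynomial.homogeneousComponent n (sqT h f)}

/-- The cohit space `QP_n^{⊗h}`: degree-`n` homogeneous polynomials modulo hit elements. -/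
abbrev QP (h n : ℕ) :=
  ↥(homogeneousSubmodule (Fin h) (ZMod 2) n) ⧸
    ((hitSub h n).comap (homogeneousSubmodule (Fin h) (ZMod 2) n).subtype)

abbrev P6 := MvPolynomial (Fin 6) (ZMod 2)

noncomputable def LS : P6 →ₗ[ZMod 2] P6 :=
  (homogeneousComponent 4) ∘ₗ (sqT 6).toLinearMap

lemma LS_apply (p : P6) : LS p = homogeneousComponent 4 (sqT 6 p) := rfl

lemma hc4_of_deg {p : P6} {m : ℕ} (h : p.IsHomogeneous m) (hm : m ≠ 4) :
    homogeneousComponent 4 p = 0 := by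
  rw [homogeneousComponent_of_mem h, if_neg (by omega)]

lemma hc4_self {p : P6} (h : p.IsHomogeneous 4) : homogeneousComponent 4 p = p := by
  rw [homogeneousComponent_of_mem h, if_pos rfl]

lemma homog_cast {p : P6} {m n : ℕ} (h : p.IsHomogeneous m) (e : m = n) : p.IsHomogeneous n :=
  e ▸ h

lemma sqT_X (a : Fin 6) : sqT 6 (X a) = X a + X a ^ 2 := aeval_X _ a

lemma genA (a b c : Fin 6) :
    LS (X a * X b * X c) =
      X a ^ 2 * X b * X c + X a * X b ^ 2 * X c + X a * X b * X c ^ 2 := by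
  have hX : ∀ x : Fin 6, (X x : P6).IsHomogeneous 1 := fun x => isHomogeneous_X _ x
  have hX2 : ∀ x : Fin 6, ((X x : P6) ^ 2).IsHomogeneous 2 := fun x => by
    simpa using (hX x).pow 2
  have e1 : sqT 6 (X a * X b * X c) =
      (X a + X a ^ 2) * (X b + X b ^ 2) * (X c + X c ^ 2) := by
    simp [map_mul, sqT_X]
  have e2 : (X a + X a ^ 2) * (X b + X b ^ 2) * (X c + X c ^ 2)
      = (X a * X b * X c : P6)
        + (X a ^ 2 * X b * X c + X a * X b ^ 2 * X c + X a * X b * X c ^ 2)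
        + (X a ^ 2 * X b ^ 2 * X c + X a ^ 2 * X b * X c ^ 2 + X a * X b ^ 2 * X c ^ 2)
        + X a ^ 2 * X b ^ 2 * X c ^ 2 := by ring
  rw [LS_apply, e1, e2]
  rw [map_add, map_add, map_add, map_add, map_add, map_add, map_add]
  rw [hc4_of_deg (((hX a).mul (hX b)).mul (hX c)) (by norm_num)]
  rw [hc4_self (homog_cast (((hX2 a).mul (hX b)).mul (hX c)) (by norm_num))]
  rw [hc4_self (homog_cast (((hX a).mul (hX2 b)).mul (hX c)) (by norm_num))]
  rw [hc4_self (homog_cast (((hX a).mul (hX b)).mul (hX2 c)) (by norm_num))]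
  rw [hc4_of_deg (((hX2 a).mul (hX2 b)).mul (hX c)) (by norm_num)]
  rw [hc4_of_deg (((hX2 a).mul (hX b)).mul (hX2 c)) (by norm_num)]
  rw [hc4_of_deg (((hX a).mul (hX2 b)).mul (hX2 c)) (by norm_num)]
  rw [hc4_of_deg (((hX2 a).mul (hX2 b)).mul (hX2 c)) (by norm_num)]
  ring

lemma genB (a b : Fin 6) : LS (X a * X b) = X a ^ 2 * X b ^ 2 := by
  have hX : ∀ x : Fin 6, (X x : P6).IsHomogeneous 1 := fun x => isHomogeneous_X _ x
  have hX2 : ∀ x : Fin 6, ((X x : P6) ^ 2).IsHomogeneous 2 := fun x => by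
    simpa using (hX x).pow 2
  have e1 : sqT 6 (X a * X b) = (X a + X a ^ 2) * (X b + X b ^ 2) := by
    simp [map_mul, sqT_X]
  have e2 : (X a + X a ^ 2) * (X b + X b ^ 2)
      = (X a * X b : P6) + (X a ^ 2 * X b + X a * X b ^ 2) + X a ^ 2 * X b ^ 2 := by ring
  rw [LS_apply, e1, e2, map_add, map_add, map_add]
  rw [hc4_of_deg ((hX a).mul (hX b)) (by norm_num)]
  rw [hc4_of_deg ((hX2 a).mul (hX b)) (by norm_num)]
  rw [hc4_of_deg ((hX a).mul (hX2 b)) (by norm_num)]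
  rw [hc4_self (homog_cast ((hX2 a).mul (hX2 b)) (by norm_num))]
  ring

lemma genC (a : Fin 6) : LS (X a) = 0 := by
  have hX : ∀ x : Fin 6, (X x : P6).IsHomogeneous 1 := fun x => isHomogeneous_X _ x
  have hX2 : ∀ x : Fin 6, ((X x : P6) ^ 2).IsHomogeneous 2 := fun x => by
    simpa using (hX x).pow 2
  rw [LS_apply, sqT_X, map_add, hc4_of_deg (hX a) (by norm_num),
    hc4_of_deg (hX2 a) (by norm_num), add_zero]

lemma genOne : LS 1 = 0 := by
  rw [LS_apply, map_one, hc4_of_deg (isHomogeneous_one _ _) (by norm_num)]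

/-! ### Index types and the generating family -/

abbrev I2 : Type := {p : Fin 6 × Fin 6 // p.1 < p.2}
abbrev I3 : Type := {t : Fin 6 × Fin 6 × Fin 6 // t.1 < t.2.1 ∧ t.2.1 < t.2.2}
abbrev Γ6 : Type := Fin 6 ⊕ I2 ⊕ I3

/-- the symmetric degree-4 generator coming from `Sq^1` of a cubic monomial -/
noncomputable def sA (a b c : Fin 6) : P6 :=
  X a ^ 2 * X b * X c + X a * X b ^ 2 * X c + X a * X b * X c ^ 2

noncomputable def gfam : Γ6 → P6
  | Sum.inl a => X a ^ 4
  | Sum.inr (Sum.inl q) => X q.1.1 ^ 2 * X q.1.2 ^ 2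
  | Sum.inr (Sum.inr t) => sA t.1.1 t.1.2.1 t.1.2.2

lemma genA' (a b c : Fin 6) : LS (X a * X b * X c) = sA a b c := genA a b c

lemma sA_aab (a b : Fin 6) : sA a a b = X a ^ 2 * X b ^ 2 := by
  have h : sA a a b = (X a ^ 2 * X a * X b + X a ^ 2 * X a * X b) + X a ^ 2 * X b ^ 2 := by
    unfold sA; ring
  rw [h, CharTwo.add_self_eq_zero, zero_add]

lemma sA_abb (a b : Fin 6) : sA a b b = X a ^ 2 * X b ^ 2 := by
  have h : sA a b b = (X a * X b ^ 2 * X b + X a * X b ^ 2 * X b) + X a ^ 2 * X b ^ 2 := by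
    unfold sA; ring
  rw [h, CharTwo.add_self_eq_zero, zero_add]

lemma sA_aaa (a : Fin 6) : sA a a a = X a ^ 4 := by
  have h : sA a a a = (X a ^ 4 + X a ^ 4) + X a ^ 4 := by unfold sA; ring
  rw [h, CharTwo.add_self_eq_zero, zero_add]

/-! ### membership of the basic quartics in the span of `gfam` -/

lemma memB (a b : Fin 6) :
    (X a ^ 2 * X b ^ 2 : P6) ∈ Submodule.span (ZMod 2) (Set.range gfam) := by
  rcases lt_trichotomy a b with h | rfl | h
  · exact Submodule.subset_span ⟨Sum.inr (Sum.inl ⟨(a, b), h⟩), rfl⟩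
  · have : (X a ^ 2 * X a ^ 2 : P6) = gfam (Sum.inl a) := by
      show _ = (X a ^ 4 : P6); ring
    rw [this]; exact Submodule.subset_span ⟨Sum.inl a, rfl⟩
  · have : (X a ^ 2 * X b ^ 2 : P6) = X b ^ 2 * X a ^ 2 := by ring
    rw [this]; exact Submodule.subset_span ⟨Sum.inr (Sum.inl ⟨(b, a), h⟩), rfl⟩

set_option maxHeartbeats 1000000 in
lemma memA (a b c : Fin 6) :
    sA a b c ∈ Submodule.span (ZMod 2) (Set.range gfam) := by
  have key : ∀ x y z : Fin 6, x ≤ y → y ≤ z →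
      sA x y z ∈ Submodule.span (ZMod 2) (Set.range gfam) := by
    intro x y z hxy hyz
    rcases eq_or_lt_of_le hxy with rfl | h1
    · rw [sA_aab]; exact memB x z
    · rcases eq_or_lt_of_le hyz with rfl | h2
      · rw [sA_abb]; exact memB x y
      · exact Submodule.subset_span ⟨Sum.inr (Sum.inr ⟨(x, y, z), h1, h2⟩), rfl⟩
  have hsym : ∀ x y z : Fin 6, sA a b c = sA x y z →
      sA x y z ∈ Submodule.span (ZMod 2) (Set.range gfam) →
      sA a b c ∈ Submodule.span (ZMod 2) (Set.range gfam) := fun x y z h hm => h ▸ hm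
  rcases le_total a b with hab | hab <;> rcases le_total b c with hbc | hbc <;>
    rcases le_total a c with hac | hac
  · exact key a b c hab hbc
  · exact key a b c hab hbc
  · exact hsym a c b (by unfold sA; ring) (key a c b hac hbc)
  · exact hsym c a b (by unfold sA; ring) (key c a b hac hab)
  · exact hsym b a c (by unfold sA; ring) (key b a c hab hac)
  · exact hsym b c a (by unfold sA; ring) (key b c a hbc hac)
  · exact hsym c b a (by unfold sA; ring) (key c b a hbc hab)
  · exact hsym c b a (by unfold sA; ring) (key c b a hbc hab)

/-! ### decomposition of small-degree monomials -/

lemma degree_eq_sum_univ (d : Fin 6 →₀ ℕ) : Finsupp.degree d = ∑ j : Fin 6, d j :=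
  Finset.sum_subset (Finset.subset_univ _)
    (fun j _ hj => Finsupp.notMem_support_iff.mp hj)

lemma exists_single_add {n : ℕ} {d : Fin 6 →₀ ℕ} (hd : Finsupp.degree d = n + 1) :
    ∃ (a : Fin 6) (d' : Fin 6 →₀ ℕ), Finsupp.degree d' = n ∧ d = Finsupp.single a 1 + d' := by
  have hne : d ≠ 0 := by
    intro h; rw [h, map_zero] at hd; omega
  obtain ⟨a, ha⟩ := Finsupp.support_nonempty_iff.mpr hne
  have ha1 : 1 ≤ d a := Nat.one_le_iff_ne_zero.mpr (Finsupp.mem_support_iff.mp ha)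
  refine ⟨a, d - Finsupp.single a 1, ?_, ?_⟩
  · have hdd : d = Finsupp.single a 1 + (d - Finsupp.single a 1) := by
      ext j
      simp only [Finsupp.add_apply, Finsupp.tsub_apply, Finsupp.single_apply]
      by_cases h : a = j
      · subst h; rw [if_pos rfl]; omega
      · simp [h]
    have := hd
    rw [hdd, degree_eq_sum_univ] at this
    simp only [Finsupp.add_apply] at this
    rw [Finset.sum_add_distrib] at this
    rw [← degree_eq_sum_univ (d - Finsupp.single a 1)] at this
    have hs : ∑ j : Fin 6, (Finsupp.single a 1 : Fin 6 →₀ ℕ) j = 1 := by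
      simp [Finsupp.single_apply]
    omega
  · ext j
    simp only [Finsupp.add_apply, Finsupp.tsub_apply, Finsupp.single_apply]
    by_cases h : a = j
    · subst h; rw [if_pos rfl]; omega
    · simp [h]

lemma monomial_single_add (a : Fin 6) (d : Fin 6 →₀ ℕ) :
    (monomial (Finsupp.single a 1 + d) (1 : ZMod 2) : P6) = X a * monomial d 1 := by
  rw [show (X a : P6) = monomial (Finsupp.single a 1) 1 by rw [← pow_one (X a), X_pow_eq_monomial],
    monomial_mul, one_mul]

lemma LS_monomial_mem {d : Fin 6 →₀ ℕ} (hd : Finsupp.degree d ≤ 3) :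
    LS (monomial d 1) ∈ Submodule.span (ZMod 2) (Set.range gfam) := by
  rcases (by omega : Finsupp.degree d = 0 ∨ Finsupp.degree d = 1 ∨ Finsupp.degree d = 2 ∨
      Finsupp.degree d = 3) with h | h | h | h
  · rw [(Finsupp.degree_eq_zero_iff d).mp h]
    rw [show (monomial (0 : Fin 6 →₀ ℕ) (1 : ZMod 2) : P6) = 1 by
      rw [monomial_zero']; exact C_1]
    rw [genOne]; exact Submodule.zero_mem _
  · obtain ⟨a, d', hd', rfl⟩ := exists_single_add h
    rw [(Finsupp.degree_eq_zero_iff d').mp hd', add_zero,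
      show (monomial (Finsupp.single a 1) (1 : ZMod 2) : P6) = X a by
        rw [← pow_one (X a), X_pow_eq_monomial],
      genC]
    exact Submodule.zero_mem _
  · obtain ⟨a, d', hd', rfl⟩ := exists_single_add h
    obtain ⟨b, d'', hd'', rfl⟩ := exists_single_add hd'
    rw [(Finsupp.degree_eq_zero_iff d'').mp hd'', add_zero, monomial_single_add,
      show (monomial (Finsupp.single b 1) (1 : ZMod 2) : P6) = X b by
        rw [← pow_one (X b), X_pow_eq_monomial]]
    rw [genB]; exact memB a b
  · obtain ⟨a, d', hd', rfl⟩ := exists_single_add h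
    obtain ⟨b, d'', hd'', rfl⟩ := exists_single_add hd'
    obtain ⟨c, d''', hd''', rfl⟩ := exists_single_add hd''
    rw [(Finsupp.degree_eq_zero_iff d''').mp hd''', add_zero, monomial_single_add,
      monomial_single_add,
      show (monomial (Finsupp.single c 1) (1 : ZMod 2) : P6) = X c by
        rw [← pow_one (X c), X_pow_eq_monomial]]
    rw [show (X a * (X b * X c) : P6) = X a * X b * X c by ring, genA']
    exact memA a b c

/-! ### `hitSub 6 4` equals the span of `gfam` -/

lemma hit_eq : hitSub 6 4 = Submodule.span (ZMod 2) (Set.range gfam) := by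
  apply le_antisymm
  · rw [hitSub, Submodule.span_le]
    rintro g ⟨k, f, hk1, hk4, hf, rfl⟩
    have hLf : MvPolynomial.homogeneousComponent 4 (sqT 6 f) = LS f := rfl
    rw [hLf, f.as_sum, map_sum]
    apply Submodule.sum_mem
    intro d hd
    have hcd : coeff d f ≠ 0 := MvPolynomial.mem_support_iff.mp hd
    have hdeg : Finsupp.degree d = 4 - k := by
      rw [Finsupp.degree_eq_weight_one]; exact hf hcd
    have hle : Finsupp.degree d ≤ 3 := by omega
    rw [show (monomial d (coeff d f) : P6) = (coeff d f) • monomial d 1 by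
      rw [smul_monomial, smul_eq_mul, mul_one], map_smul]
    exact Submodule.smul_mem _ _ (LS_monomial_mem hle)
  · rw [Submodule.span_le]
    rintro g ⟨γ, rfl⟩
    have mem_of : ∀ (k : ℕ) (f : P6), 1 ≤ k → k ≤ 4 → f.IsHomogeneous (4 - k) →
        LS f ∈ hitSub 6 4 := by
      intro k f h1 h4 hf
      exact Submodule.subset_span ⟨k, f, h1, h4, hf, rfl⟩
    match γ with
    | Sum.inl a =>
      have hf : (X a * X a * X a : P6).IsHomogeneous (4 - 1) :=
        homog_cast (((isHomogeneous_X _ a).mul (isHomogeneous_X _ a)).mul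
          (isHomogeneous_X _ a)) (by norm_num)
      have := mem_of 1 (X a * X a * X a) le_rfl (by norm_num) hf
      rw [genA', sA_aaa] at this
      exact this
    | Sum.inr (Sum.inl q) =>
      have hf : (X q.1.1 * X q.1.2 : P6).IsHomogeneous (4 - 2) :=
        homog_cast ((isHomogeneous_X _ _).mul (isHomogeneous_X _ _)) (by norm_num)
      have := mem_of 2 (X q.1.1 * X q.1.2) (by norm_num) (by norm_num) hf
      rw [genB] at this
      exact this
    | Sum.inr (Sum.inr t) =>
      have hf : (X t.1.1 * X t.1.2.1 * X t.1.2.2 : P6).IsHomogeneous (4 - 1) :=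
        homog_cast (((isHomogeneous_X _ _).mul (isHomogeneous_X _ _)).mul
          (isHomogeneous_X _ _)) (by norm_num)
      have := mem_of 1 _ le_rfl (by norm_num) hf
      rw [genA'] at this
      exact this

/-! ### pivot functionals and linear independence -/

noncomputable def pvΓ : Γ6 → (Fin 6 →₀ ℕ)
  | Sum.inl a => Finsupp.single a 4
  | Sum.inr (Sum.inl q) => Finsupp.single q.1.1 2 + Finsupp.single q.1.2 2
  | Sum.inr (Sum.inr t) =>
      Finsupp.single t.1.1 2 + Finsupp.single t.1.2.1 1 + Finsupp.single t.1.2.2 1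

def w4 (a : Fin 6) : Fin 6 → ℕ := fun j => if a = j then 4 else 0
def w22 (q : I2) : Fin 6 → ℕ := fun j => (if q.1.1 = j then 2 else 0) + (if q.1.2 = j then 2 else 0)
def wT1 (t : I3) : Fin 6 → ℕ := fun j =>
  (if t.1.1 = j then 2 else 0) + (if t.1.2.1 = j then 1 else 0) + (if t.1.2.2 = j then 1 else 0)
def wT2 (t : I3) : Fin 6 → ℕ := fun j =>
  (if t.1.1 = j then 1 else 0) + (if t.1.2.1 = j then 2 else 0) + (if t.1.2.2 = j then 1 else 0)
def wT3 (t : I3) : Fin 6 → ℕ := fun j =>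
  (if t.1.1 = j then 1 else 0) + (if t.1.2.1 = j then 1 else 0) + (if t.1.2.2 = j then 2 else 0)

lemma dec_ne_4_22 : ∀ (a : Fin 6) (q : I2), ¬ ∀ j, w4 a j = w22 q j := by decide
lemma dec_ne_4_211 : ∀ (a : Fin 6) (t : I3), ¬ ∀ j, w4 a j = wT1 t j := by decide
lemma dec_ne_22_4 : ∀ (q : I2) (a : Fin 6), ¬ ∀ j, w22 q j = w4 a j := by decide
lemma dec22 : ∀ q q' : I2, (∀ j, w22 q j = w22 q' j) ↔ q = q' := by decide
lemma dec_ne_22_211 : ∀ (q : I2) (t : I3), ¬ ∀ j, w22 q j = wT1 t j := by decide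
lemma dec_ne_211_4 : ∀ (t : I3) (a : Fin 6),
    (¬ ∀ j, wT1 t j = w4 a j) ∧ (¬ ∀ j, wT2 t j = w4 a j) ∧ (¬ ∀ j, wT3 t j = w4 a j) := by decide
lemma dec_ne_211_22 : ∀ (t : I3) (q : I2),
    (¬ ∀ j, wT1 t j = w22 q j) ∧ (¬ ∀ j, wT2 t j = w22 q j) ∧ (¬ ∀ j, wT3 t j = w22 q j) := by
  decide
set_option maxHeartbeats 1000000 in
lemma dec33 : ∀ t t' : I3, ((∀ j, wT1 t j = wT1 t' j) ↔ t = t') ∧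
    (¬ ∀ j, wT2 t j = wT1 t' j) ∧ (¬ ∀ j, wT3 t j = wT1 t' j) := by decide

/-- convert a Finsupp equation into a pointwise one -/
lemma fs_pt {u v : Fin 6 →₀ ℕ} (h : u = v) (j : Fin 6) : u j = v j := DFunLike.congr_fun h j

lemma mono4 (a : Fin 6) : (X a ^ 4 : P6) = monomial (Finsupp.single a 4) 1 :=
  X_pow_eq_monomial

lemma mono22 (a b : Fin 6) :
    (X a ^ 2 * X b ^ 2 : P6) = monomial (Finsupp.single a 2 + Finsupp.single b 2) 1 := by
  rw [X_pow_eq_monomial, X_pow_eq_monomial, monomial_mul, one_mul]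

lemma mono211 (a b c : Fin 6) : (X a ^ 2 * X b * X c : P6)
    = monomial (Finsupp.single a 2 + Finsupp.single b 1 + Finsupp.single c 1) 1 := by
  rw [X_pow_eq_monomial, ← pow_one (X b), ← pow_one (X c), X_pow_eq_monomial,
    X_pow_eq_monomial, monomial_mul, monomial_mul, one_mul, one_mul]

lemma sA_monomial (a b c : Fin 6) : sA a b c
    = monomial (Finsupp.single a 2 + Finsupp.single b 1 + Finsupp.single c 1) 1
    + monomial (Finsupp.single a 1 + Finsupp.single b 2 + Finsupp.single c 1) 1
    + monomial (Finsupp.single a 1 + Finsupp.single b 1 + Finsupp.single c 2) 1 := by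
  unfold sA
  rw [mono211 a b c]
  rw [show (X a * X b ^ 2 * X c : P6) = X b ^ 2 * X a * X c by ring, mono211 b a c,
    show (X a * X b * X c ^ 2 : P6) = X c ^ 2 * X a * X b by ring, mono211 c a b]
  rw [show (Finsupp.single b 2 + Finsupp.single a 1 + Finsupp.single c 1 : Fin 6 →₀ ℕ)
      = Finsupp.single a 1 + Finsupp.single b 2 + Finsupp.single c 1 from by abel,
    show (Finsupp.single c 2 + Finsupp.single a 1 + Finsupp.single b 1 : Fin 6 →₀ ℕ)
      = Finsupp.single a 1 + Finsupp.single b 1 + Finsupp.single c 2 from by abel]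

lemma delta (γ γ' : Γ6) :
    coeff (pvΓ γ') (gfam γ) = if γ' = γ then 1 else 0 := by
  match γ, γ' with
  | Sum.inl a, Sum.inl a' =>
    show coeff (Finsupp.single a' 4) (X a ^ 4 : P6) = _
    rw [mono4, coeff_monomial]
    by_cases h : a' = a
    · subst h; rw [if_pos rfl, if_pos rfl]
    · rw [if_neg (fun heq => h (((Finsupp.single_left_inj (by norm_num)).mp heq).symm)),
        if_neg (by simp [h])]
  | Sum.inl a, Sum.inr (Sum.inl q) =>
    simp only [gfam, pvΓ]
    show coeff _ (X a ^ 4 : P6) = _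
    rw [mono4, coeff_monomial,
      if_neg (fun heq => dec_ne_4_22 a q (fun j => by
        simpa only [Finsupp.single_apply, Finsupp.add_apply, pvΓ, w4, w22] using fs_pt heq j)),
      if_neg (by simp)]
  | Sum.inl a, Sum.inr (Sum.inr t) =>
    simp only [gfam, pvΓ]
    show coeff _ (X a ^ 4 : P6) = _
    rw [mono4, coeff_monomial,
      if_neg (fun heq => dec_ne_4_211 a t (fun j => by
        simpa only [Finsupp.single_apply, Finsupp.add_apply, pvΓ, w4, wT1] using fs_pt heq j)),
      if_neg (by simp)]
  | Sum.inr (Sum.inl q), Sum.inl a =>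
    simp only [gfam, pvΓ]
    show coeff _ (X q.1.1 ^ 2 * X q.1.2 ^ 2 : P6) = _
    rw [mono22, coeff_monomial,
      if_neg (fun heq => dec_ne_22_4 q a (fun j => by
        simpa only [Finsupp.single_apply, Finsupp.add_apply, pvΓ, w4, w22] using fs_pt heq j)),
      if_neg (by simp)]
  | Sum.inr (Sum.inl q), Sum.inr (Sum.inl q') =>
    simp only [gfam, pvΓ]
    show coeff _ (X q.1.1 ^ 2 * X q.1.2 ^ 2 : P6) = _
    rw [mono22, coeff_monomial]
    by_cases h : q' = q
    · subst h; rw [if_pos rfl, if_pos rfl]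
    · rw [if_neg (fun heq => h (((dec22 q q').mp (fun j => by
        simpa only [Finsupp.single_apply, Finsupp.add_apply, pvΓ, w22] using fs_pt heq j)).symm)),
        if_neg (by simp [h])]
  | Sum.inr (Sum.inl q), Sum.inr (Sum.inr t) =>
    simp only [gfam, pvΓ]
    show coeff _ (X q.1.1 ^ 2 * X q.1.2 ^ 2 : P6) = _
    rw [mono22, coeff_monomial,
      if_neg (fun heq => dec_ne_22_211 q t (fun j => by
        simpa only [Finsupp.single_apply, Finsupp.add_apply, pvΓ, w22, wT1] using fs_pt heq j)),
      if_neg (by simp)]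
  | Sum.inr (Sum.inr t), Sum.inl a =>
    simp only [gfam, pvΓ]
    show coeff _ (sA t.1.1 t.1.2.1 t.1.2.2) = _
    rw [sA_monomial, coeff_add, coeff_add, coeff_monomial, coeff_monomial, coeff_monomial,
      if_neg (fun heq => (dec_ne_211_4 t a).1 (fun j => by
        simpa only [Finsupp.single_apply, Finsupp.add_apply, pvΓ, w4, wT1] using fs_pt heq j)),
      if_neg (fun heq => (dec_ne_211_4 t a).2.1 (fun j => by
        simpa only [Finsupp.single_apply, Finsupp.add_apply, pvΓ, w4, wT2] using fs_pt heq j)),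
      if_neg (fun heq => (dec_ne_211_4 t a).2.2 (fun j => by
        simpa only [Finsupp.single_apply, Finsupp.add_apply, pvΓ, w4, wT3] using fs_pt heq j)),
      if_neg (by simp)]
    norm_num
  | Sum.inr (Sum.inr t), Sum.inr (Sum.inl q) =>
    simp only [gfam, pvΓ]
    show coeff _ (sA t.1.1 t.1.2.1 t.1.2.2) = _
    rw [sA_monomial, coeff_add, coeff_add, coeff_monomial, coeff_monomial, coeff_monomial,
      if_neg (fun heq => (dec_ne_211_22 t q).1 (fun j => by
        simpa only [Finsupp.single_apply, Finsupp.add_apply, pvΓ, w22, wT1] using fs_pt heq j)),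
      if_neg (fun heq => (dec_ne_211_22 t q).2.1 (fun j => by
        simpa only [Finsupp.single_apply, Finsupp.add_apply, pvΓ, w22, wT2] using fs_pt heq j)),
      if_neg (fun heq => (dec_ne_211_22 t q).2.2 (fun j => by
        simpa only [Finsupp.single_apply, Finsupp.add_apply, pvΓ, w22, wT3] using fs_pt heq j)),
      if_neg (by simp)]
    norm_num
  | Sum.inr (Sum.inr t), Sum.inr (Sum.inr t') =>
    simp only [gfam, pvΓ]
    show coeff _ (sA t.1.1 t.1.2.1 t.1.2.2) = _
    rw [sA_monomial, coeff_add, coeff_add, coeff_monomial, coeff_monomial, coeff_monomial]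
    by_cases h : t' = t
    · subst h
      rw [if_pos rfl,
        if_neg (fun heq => (dec33 t' t').2.1 (fun j => by
          simpa only [Finsupp.single_apply, Finsupp.add_apply, pvΓ, wT1, wT2] using fs_pt heq j)),
        if_neg (fun heq => (dec33 t' t').2.2 (fun j => by
          simpa only [Finsupp.single_apply, Finsupp.add_apply, pvΓ, wT1, wT3] using fs_pt heq j)),
        if_pos rfl]
      norm_num
    · rw [if_neg (fun heq => h (((dec33 t t').1.mp (fun j => by
          simpa only [Finsupp.single_apply, Finsupp.add_apply, pvΓ, wT1] using fs_pt heq j)).symm)),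
        if_neg (fun heq => (dec33 t t').2.1 (fun j => by
          simpa only [Finsupp.single_apply, Finsupp.add_apply, pvΓ, wT1, wT2] using fs_pt heq j)),
        if_neg (fun heq => (dec33 t t').2.2 (fun j => by
          simpa only [Finsupp.single_apply, Finsupp.add_apply, pvΓ, wT1, wT3] using fs_pt heq j)),
        if_neg (by simp [h])]
      norm_num

noncomputable def Pm : P6 →ₗ[ZMod 2] (Γ6 → ZMod 2) :=
  LinearMap.pi (fun γ => lcoeff (ZMod 2) (pvΓ γ))

lemma gfam_li : LinearIndependent (ZMod 2) gfam := by
  apply LinearIndependent.of_comp Pm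
  have hcomp : (⇑Pm ∘ gfam) = ⇑(Pi.basisFun (ZMod 2) Γ6) := by
    funext γ; funext γ'
    show coeff (pvΓ γ') (gfam γ) = _
    rw [delta, Pi.basisFun_apply, Pi.single_apply]
  rw [hcomp]
  exact (Pi.basisFun (ZMod 2) Γ6).linearIndependent

lemma cardΓ : Fintype.card Γ6 = 41 := by decide

lemma finrank_hit : Module.finrank (ZMod 2) (hitSub 6 4) = 41 := by
  rw [hit_eq]
  rw [finrank_span_eq_card gfam_li]
  exact cardΓ

/-! ### dimension of the degree-4 homogeneous component -/

abbrev Emon : Type := {v : Fin 6 → Fin 5 // ∑ j, (v j : ℕ) = 4}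

set_option maxHeartbeats 4000000 in
set_option maxRecDepth 100000 in
lemma cardEmon : Fintype.card Emon = 126 := by decide

noncomputable def eqvE : {d : Fin 6 →₀ ℕ // Finsupp.degree d = 4} ≃ Emon where
  toFun d := ⟨fun j => ⟨d.1 j, by
      have h := Finsupp.le_degree j d.1; rw [d.2] at h; omega⟩, by
    have h := degree_eq_sum_univ d.1
    rw [d.2] at h
    simpa using h.symm⟩
  invFun v := ⟨Finsupp.equivFunOnFinite.symm (fun j => (v.1 j : ℕ)), by
    rw [degree_eq_sum_univ]
    simp only [Finsupp.coe_equivFunOnFinite_symm]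
    exact v.2⟩
  left_inv d := Subtype.ext (Finsupp.equivFunOnFinite_symm_coe d.1)
  right_inv v := Subtype.ext (funext fun j => Fin.ext (by
    simp only [Finsupp.coe_equivFunOnFinite_symm]))

noncomputable instance : Fintype ↥{d : Fin 6 →₀ ℕ | Finsupp.degree d = 4} :=
  Fintype.ofEquiv Emon eqvE.symm

noncomputable def homEquiv : ↥(homogeneousSubmodule (Fin 6) (ZMod 2) 4) ≃ₗ[ZMod 2]
    ({d : Fin 6 →₀ ℕ | Finsupp.degree d = 4} → ZMod 2) :=
  ((LinearEquiv.ofEq _ _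
      (homogeneousSubmodule_eq_finsupp_supported (Fin 6) (ZMod 2) 4)).trans
    (AddMonoidAlgebra.supportedEquivFinsupp _)).trans
    (Finsupp.linearEquivFunOnFinite (ZMod 2) (ZMod 2) _)

instance : Module.Finite (ZMod 2) ↥(homogeneousSubmodule (Fin 6) (ZMod 2) 4) :=
  Module.Finite.equiv homEquiv.symm

lemma finrank_hom : Module.finrank (ZMod 2) ↥(homogeneousSubmodule (Fin 6) (ZMod 2) 4) = 126 := by
  rw [homEquiv.finrank_eq, Module.finrank_fintype_fun_eq_card]
  rw [show Fintype.card ↥{d : Fin 6 →₀ ℕ | Finsupp.degree d = 4} = Fintype.card Emon from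
    Fintype.card_congr eqvE]
  exact cardEmon

set_option synthInstance.maxHeartbeats 1000000 in
set_option maxHeartbeats 1000000 in
/-- The cohit space `QP_4^{⊗6}` has dimension 85 over `F2`. -/
theorem dim_QP_6_4 : Module.finrank (ZMod 2) (QP 6 4) = 85 := by
  have hle : hitSub 6 4 ≤ homogeneousSubmodule (Fin 6) (ZMod 2) 4 := by
    rw [hitSub, Submodule.span_le]
    rintro g ⟨k, f, _, _, _, rfl⟩
    exact homogeneousComponent_mem 4 _
  have h1 := Submodule.finrank_quotient_add_finrank
    ((hitSub 6 4).comap (homogeneousSubmodule (Fin 6) (ZMod 2) 4).subtype)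
  have h2 : Module.finrank (ZMod 2)
      ↥((hitSub 6 4).comap (homogeneousSubmodule (Fin 6) (ZMod 2) 4).subtype) = 41 := by
    rw [(Submodule.comapSubtypeEquivOfLe hle).finrank_eq]
    exact finrank_hit
  rw [h2, finrank_hom] at h1
  show Module.finrank (ZMod 2)
      (↥(homogeneousSubmodule (Fin 6) (ZMod 2) 4) ⧸
        ((hitSub 6 4).comap (homogeneousSubmodule (Fin 6) (ZMod 2) 4).subtype)) = 85
  omega
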